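/- For n ≥ 1 define the operator T_n on real functions g on {0,1,…,n} by (T_n g)(a) = [ (a+1)(n−a)·g(a+1) + a(n−a+1)·g(a−1) + ((a+1)² + (n−a+1)²)·g(a) ] / ((n+1)(n+2)) (the coefficients of g(n+1) and g(−1) vanish, so these values are irrelevant). For a real polynomial f, let f_n(a) := f(a/n). Then for every real polynomial f, max_{0 ≤ a ≤ n} | n²·((T_n f_n)(a) − f_n(a)) − [ x(1−x)·f''(x) + (1−2x)·f'(x) ]_{x = a/n} | tends to 0 as n → ∞. (This is the convergence of the generators of the up–down chains on the Pascal triangle to the diffusion generator x(1−x) d²/dx² + (1−2x) d/dx on [0,1].) -/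
import Mathlib
open Polynomial Filter

lemma taylor_sum' (f : ℝ[X]) (m : ℕ) (hm : f.natDegree < m) (x t : ℝ) :
    f.eval (x + t) = ∑ i ∈ Finset.range m, (Polynomial.hasseDeriv i f).eval x * t ^ i := by
  have hdeg : (Polynomial.taylor x f).natDegree < m := by rwa [Polynomial.natDegree_taylor]
  have h := Polynomial.eval_eq_sum_range' hdeg t
  rw [Polynomial.taylor_eval, add_comm] at h
  rw [h]
  exact Finset.sum_congr rfl fun i _ => by rw [Polynomial.taylor_coeff]

lemma eval_abs_le' (p : ℝ[X]) (m : ℕ) (hm : p.natDegree < m) (x : ℝ) (hx0 : 0 ≤ x) (hx1 : x ≤ 1) :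
    |p.eval x| ≤ ∑ j ∈ Finset.range m, |p.coeff j| := by
  rw [Polynomial.eval_eq_sum_range' hm]
  refine (Finset.abs_sum_le_sum_abs _ _).trans (Finset.sum_le_sum fun j _ => ?_)
  rw [abs_mul]
  have h1 : |x ^ j| ≤ 1 := by
    rw [abs_pow, abs_of_nonneg hx0]
    exact pow_le_one₀ hx0 hx1
  nlinarith [abs_nonneg (p.coeff j)]

lemma div_abs_le' {V D nr : ℝ} (hD : 0 < D) (hn : 0 < nr) (h : |V| * nr ≤ 3 * D) :
    |V / D| ≤ 3 / nr := by
  rw [abs_div, abs_of_pos hD, div_le_div_iff₀ hD hn]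
  exact h

lemma second_deriv_eval (f : ℝ[X]) (x : ℝ) :
    (derivative (derivative f)).eval x = 2 * (Polynomial.hasseDeriv 2 f).eval x := by
  have h := congrFun (Polynomial.factorial_smul_hasseDeriv (R := ℝ) 2) f
  simp only [LinearMap.smul_apply, Function.iterate_succ, Function.iterate_zero,
    Function.comp_apply, id_eq, Nat.factorial] at h
  rw [← h]
  norm_num [Polynomial.eval_smul]

set_option maxHeartbeats 1600000 in
lemma coeff_bound (nr ar x t A B N : ℝ) (c : ℕ → ℝ)
    (hnr : 1 ≤ nr) (har0 : 0 ≤ ar) (harn : ar ≤ nr)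
    (hxdef : x = ar / nr) (htdef : t = 1 / nr)
    (hA : A = (ar + 1) * (nr - ar)) (hB : B = ar * (nr - ar + 1))
    (hN : N = (nr + 1) * (nr + 2))
    (hc : c = fun i =>
      nr ^ 2 / N * (A * t ^ i + B * (-t) ^ i - (if i = 0 then A + B else 0))
      - (if i = 1 then 1 - 2 * x else 0) - (if i = 2 then 2 * x * (1 - x) else 0)) :
    ∀ i : ℕ, |c i| ≤ 3 / nr := by
  have hn0 : (0 : ℝ) < nr := by linarith
  have hN0 : (0 : ℝ) < N := by rw [hN]; nlinarith
  have hA0 : 0 ≤ A := by rw [hA]; apply mul_nonneg <;> linarith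
  have hB0 : 0 ≤ B := by rw [hB]; apply mul_nonneg <;> linarith
  have hABle : A + B ≤ 2 * nr * (nr + 1) := by
    rw [hA, hB]; nlinarith [mul_nonneg hn0.le (sub_nonneg.2 harn), sq_nonneg ar]
  have hAB2N : A + B ≤ 2 * N := by rw [hN]; nlinarith [hABle]
  have ht0 : 0 < t := by rw [htdef]; exact one_div_pos.mpr hn0
  have ht1 : t ≤ 1 := by rw [htdef, div_le_one hn0]; exact hnr
  intro i
  have h32 : (0 : ℝ) < 3 * nr + 2 := by linarith
  rcases Nat.lt_or_ge i 3 with hi | hi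
  · interval_cases i
    ·
      have h0 : c 0 = 0 := by
        simp only [hc]; norm_num
      clear hc
      rw [h0, abs_zero]
      exact div_nonneg (by norm_num) hn0.le
    ·
      have h1 : c 1 = (-((nr - 2 * ar) * (3 * nr + 2))) / (nr * N) := by
        rw [eq_div_iff (mul_pos hn0 hN0).ne']
        simp only [hc]
        norm_num
        rw [hA, hB, hxdef, htdef, hN]
        field_simp
        ring
      clear hc
      rw [h1]
      refine div_abs_le' (mul_pos hn0 hN0) hn0 ?_
      have h2 : |nr - 2 * ar| ≤ nr := abs_le.mpr ⟨by linarith, by linarith⟩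
      rw [abs_neg, abs_mul, abs_of_pos h32, hN]
      nlinarith [abs_nonneg (nr - 2 * ar),
        mul_le_mul_of_nonneg_right h2 (by nlinarith : (0:ℝ) ≤ (3 * nr + 2) * nr)]
    ·
      have h1 : c 2 = (-(2 * (ar * (nr - ar)) * (3 * nr + 2)) + nr ^ 3) / (nr ^ 2 * N) := by
        rw [eq_div_iff (mul_pos (pow_pos hn0 2) hN0).ne']
        simp only [hc]
        norm_num
        rw [hA, hB, hxdef, htdef, hN]
        field_simp
        ring
      clear hc
      rw [h1]
      refine div_abs_le' (mul_pos (pow_pos hn0 2) hN0) hn0 ?_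
      have hs0 : 0 ≤ ar * (nr - ar) := mul_nonneg har0 (by linarith)
      have hs4 : 4 * (ar * (nr - ar)) ≤ nr ^ 2 := by nlinarith [sq_nonneg (nr - 2 * ar)]
      have habs : |(-(2 * (ar * (nr - ar)) * (3 * nr + 2)) + nr ^ 3)|
          ≤ 2 * (ar * (nr - ar)) * (3 * nr + 2) + nr ^ 3 := by
        refine abs_le.mpr ⟨by nlinarith, by nlinarith⟩
      rw [hN]
      calc |(-(2 * (ar * (nr - ar)) * (3 * nr + 2)) + nr ^ 3)| * nr
          ≤ (2 * (ar * (nr - ar)) * (3 * nr + 2) + nr ^ 3) * nr :=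
            mul_le_mul_of_nonneg_right habs hn0.le
        _ ≤ 3 * (nr ^ 2 * ((nr + 1) * (nr + 2))) := by
            nlinarith [hs0, hs4, hnr, hn0,
              mul_le_mul_of_nonneg_right hs4 (mul_nonneg hn0.le hn0.le),
              mul_le_mul_of_nonneg_right hs4 hn0.le]
  · obtain ⟨i, rfl⟩ : ∃ j, i = j + 3 := ⟨i - 3, by omega⟩
    have h1 : c (i + 3) = nr ^ 2 / N * (A * t ^ (i + 3) + B * (-t) ^ (i + 3)) := by
      simp only [hc, if_neg (by omega : ¬ i + 3 = 0), if_neg (by omega : ¬ i + 3 = 1),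
        if_neg (by omega : ¬ i + 3 = 2)]
      ring
    clear hc
    have hpow : t ^ (i + 3) ≤ t ^ 3 := pow_le_pow_of_le_one ht0.le ht1 (by omega)
    have hpow0 : 0 < t ^ (i + 3) := pow_pos ht0 _
    have h2 : |A * t ^ (i + 3) + B * (-t) ^ (i + 3)| ≤ (A + B) * t ^ 3 := by
      refine (abs_add_le _ _).trans ?_
      rw [abs_mul, abs_mul, abs_pow, abs_pow, abs_neg,
        abs_of_pos ht0, abs_of_nonneg hA0, abs_of_nonneg hB0]
      have h4 := add_le_add (mul_le_mul_of_nonneg_left hpow hA0)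
        (mul_le_mul_of_nonneg_left hpow hB0)
      linarith [h4]
    have h3 : (A + B) * t ^ 3 = (A + B) / nr ^ 3 := by
      rw [htdef]; field_simp
    rw [h1, abs_mul, abs_of_pos (div_pos (pow_pos hn0 2) hN0)]
    calc nr ^ 2 / N * |A * t ^ (i + 3) + B * (-t) ^ (i + 3)|
        ≤ nr ^ 2 / N * ((A + B) / nr ^ 3) := by
          rw [← h3]; exact mul_le_mul_of_nonneg_left h2 (div_pos (pow_pos hn0 2) hN0).le
      _ ≤ 3 / nr := by
          rw [div_mul_div_comm, div_le_div_iff₀ (mul_pos hN0 (pow_pos hn0 3)) hn0]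
          nlinarith [hAB2N, mul_pos hN0 (pow_pos hn0 3), hn0, pow_pos hn0 3,
            mul_le_mul_of_nonneg_right hAB2N (pow_pos hn0 3).le]

set_option maxHeartbeats 2000000 in
lemma key_bound (f : Polynomial ℝ) : ∃ C : ℝ, 0 ≤ C ∧ ∀ n a : ℕ, 1 ≤ n → a ≤ n →
    |(n : ℝ) ^ 2 *
        ((((a : ℝ) + 1) * ((n : ℝ) - (a : ℝ)) * f.eval (((a : ℝ) + 1) / (n : ℝ))
            + (a : ℝ) * ((n : ℝ) - (a : ℝ) + 1) * f.eval (((a : ℝ) - 1) / (n : ℝ))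
            + (((a : ℝ) + 1) ^ 2 + ((n : ℝ) - (a : ℝ) + 1) ^ 2)
                * f.eval ((a : ℝ) / (n : ℝ)))
              / (((n : ℝ) + 1) * ((n : ℝ) + 2))
          - f.eval ((a : ℝ) / (n : ℝ)))
      - (((a : ℝ) / (n : ℝ)) * (1 - (a : ℝ) / (n : ℝ))
            * (derivative (derivative f)).eval ((a : ℝ) / (n : ℝ))
          + (1 - 2 * ((a : ℝ) / (n : ℝ))) * (derivative f).eval ((a : ℝ) / (n : ℝ)))|
      ≤ C / n := by
  set m := f.natDegree + 3 with hm
  set M : ℝ := ∑ i ∈ Finset.range m, ∑ j ∈ Finset.range m, |(Polynomial.hasseDeriv i f).coeff j|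
    with hM
  have hM0 : 0 ≤ M := Finset.sum_nonneg fun i _ => Finset.sum_nonneg fun j _ => abs_nonneg _
  refine ⟨3 * M, by positivity, ?_⟩
  intro n a hn ha
  set nr : ℝ := (n : ℝ) with hnrdef
  set ar : ℝ := (a : ℝ) with hardef
  have hnr : (1 : ℝ) ≤ nr := by rw [hnrdef]; exact_mod_cast hn
  have harn : ar ≤ nr := by rw [hnrdef, hardef]; exact_mod_cast ha
  have har0 : (0 : ℝ) ≤ ar := by rw [hardef]; exact Nat.cast_nonneg a
  have hn0 : (0 : ℝ) < nr := by linarith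
  set x : ℝ := ar / nr with hxdef
  have hx0 : 0 ≤ x := by rw [hxdef]; exact div_nonneg har0 hn0.le
  have hx1 : x ≤ 1 := by rw [hxdef, div_le_one hn0]; exact harn
  set t : ℝ := 1 / nr with htdef
  have ht0 : 0 < t := by rw [htdef]; exact one_div_pos.mpr hn0
  have ht1 : t ≤ 1 := by rw [htdef, div_le_one hn0]; exact hnr
  set A : ℝ := (ar + 1) * (nr - ar) with hA
  set B : ℝ := ar * (nr - ar + 1) with hB
  set N : ℝ := (nr + 1) * (nr + 2) with hN
  have hN0 : (0 : ℝ) < N := by rw [hN]; nlinarith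
  have hA0 : 0 ≤ A := by rw [hA]; apply mul_nonneg <;> linarith
  have hB0 : 0 ≤ B := by rw [hB]; apply mul_nonneg <;> linarith
  have hABle : A + B ≤ 2 * nr * (nr + 1) := by
    rw [hA, hB]; nlinarith [mul_nonneg hn0.le (sub_nonneg.2 harn), sq_nonneg ar]
  have hAB2N : A + B ≤ 2 * N := by rw [hN]; nlinarith [hABle]
  set P : ℕ → ℝ := fun i => (Polynomial.hasseDeriv i f).eval x with hP
  set c : ℕ → ℝ := fun i =>
      nr ^ 2 / N * (A * t ^ i + B * (-t) ^ i - (if i = 0 then A + B else 0))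
      - (if i = 1 then 1 - 2 * x else 0) - (if i = 2 then 2 * x * (1 - x) else 0) with hc
  have hdegm : f.natDegree < m := by omega
  have h0m : 0 < m := by omega
  have h1m : 1 < m := by omega
  have h2m : 2 < m := by omega
  set Sp : ℝ := ∑ i ∈ Finset.range m, P i * t ^ i with hSp
  set Sm : ℝ := ∑ i ∈ Finset.range m, P i * (-t) ^ i with hSm
  clear_value nr ar x t A B N P c Sp Sm
  have hplus : (ar + 1) / nr = x + t := by rw [hxdef, htdef]; field_simp
  have hminus : (ar - 1) / nr = x + (-t) := by rw [hxdef, htdef]; field_simp; ring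
  have hfp : f.eval ((ar + 1) / nr) = Sp := by
    rw [hplus, hSp]; simp only [hP]; exact taylor_sum' f m hdegm x t
  have hfm : f.eval ((ar - 1) / nr) = Sm := by
    rw [hminus, hSm]; simp only [hP]; exact taylor_sum' f m hdegm x (-t)
  have hf0 : f.eval x = P 0 := by simp [hP, Polynomial.hasseDeriv_zero']
  have hf1 : (derivative f).eval x = P 1 := by simp [hP, Polynomial.hasseDeriv_one']
  have hf2 : (derivative (derivative f)).eval x = 2 * P 2 := by
    simp only [hP]; exact second_deriv_eval f x
  have hterm : ∀ i ∈ Finset.range m, P i * c i =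
      (nr ^ 2 / N * A) * (P i * t ^ i) + (nr ^ 2 / N * B) * (P i * (-t) ^ i)
      - ((if i = 0 then nr ^ 2 / N * (A + B) * P i else 0)
        + ((if i = 1 then (1 - 2 * x) * P i else 0)
          + (if i = 2 then 2 * x * (1 - x) * P i else 0))) := by
    intro i _
    simp only [hc]
    split_ifs <;> ring
  have expand : ∑ i ∈ Finset.range m, P i * c i =
      nr ^ 2 / N * (A * Sp + B * Sm - (A + B) * P 0)
        - (1 - 2 * x) * P 1 - 2 * x * (1 - x) * P 2 := by
    rw [Finset.sum_congr rfl hterm, Finset.sum_sub_distrib, Finset.sum_add_distrib,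
      Finset.sum_add_distrib, Finset.sum_add_distrib, ← Finset.mul_sum, ← Finset.mul_sum,
      Finset.sum_ite_eq' (Finset.range m) 0, Finset.sum_ite_eq' (Finset.range m) 1,
      Finset.sum_ite_eq' (Finset.range m) 2]
    simp only [Finset.mem_range]
    rw [if_pos h0m, if_pos h1m, if_pos h2m, hSp, hSm]
    ring
  have hcb : ∀ i ∈ Finset.range m, |c i| ≤ 3 / nr := fun i _ =>
    coeff_bound nr ar x t A B N c hnr har0 harn hxdef htdef hA hB hN hc i
  have hbound : |∑ i ∈ Finset.range m, P i * c i| ≤ 3 * M / nr := by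
    refine (Finset.abs_sum_le_sum_abs _ _).trans ?_
    have step : ∀ i ∈ Finset.range m, |P i * c i|
        ≤ (∑ j ∈ Finset.range m, |(Polynomial.hasseDeriv i f).coeff j|) * (3 / nr) := by
      intro i hi
      rw [abs_mul]
      have hPi : |P i| ≤ ∑ j ∈ Finset.range m, |(Polynomial.hasseDeriv i f).coeff j| := by
        rw [hP]
        refine eval_abs_le' _ m ?_ x hx0 hx1
        exact lt_of_le_of_lt ((Polynomial.natDegree_hasseDeriv_le f i).trans (Nat.sub_le _ _))
          hdegm
      exact mul_le_mul hPi (hcb i hi) (abs_nonneg _)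
        (Finset.sum_nonneg fun j _ => abs_nonneg _)
    refine (Finset.sum_le_sum step).trans ?_
    rw [← Finset.sum_mul, ← hM]
    ring_nf
    rw [mul_comm]
  calc |nr ^ 2 *
        ((A * f.eval ((ar + 1) / nr) + B * f.eval ((ar - 1) / nr)
            + ((ar + 1) ^ 2 + (nr - ar + 1) ^ 2) * f.eval x) / N - f.eval x)
      - (x * (1 - x) * (derivative (derivative f)).eval x
          + (1 - 2 * x) * (derivative f).eval x)|
      = |∑ i ∈ Finset.range m, P i * c i| := by
        rw [hfp, hfm, hf0, hf1, hf2, expand]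
        congr 1
        rw [hA, hB, hN]
        have e1 : nr + 1 ≠ 0 := by linarith
        have e2 : nr + 2 ≠ 0 := by linarith
        field_simp
        ring
    _ ≤ 3 * M / nr := hbound

/-- For the up–down Markov chains on the Pascal triangle (the point
`(a, n-a)` of the `n`-th row encoded by `a ∈ {0,…,n}` and embedded in `[0,1]` as
`x = a/n`), the rescaled generators `n² (Tₙ - 1)` applied to a polynomial `f`
converge uniformly to `x(1-x) f''(x) + (1-2x) f'(x)`. -/
theorem pascal_updown_generators_converge (f : Polynomial ℝ) :
    Tendsto (fun n : ℕ =>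
      (Finset.range (n + 1)).sup' ⟨0, Finset.mem_range.mpr n.succ_pos⟩ (fun a : ℕ =>
        |(n : ℝ) ^ 2 *
            ((((a : ℝ) + 1) * ((n : ℝ) - (a : ℝ)) * f.eval (((a : ℝ) + 1) / (n : ℝ))
                + (a : ℝ) * ((n : ℝ) - (a : ℝ) + 1) * f.eval (((a : ℝ) - 1) / (n : ℝ))
                + (((a : ℝ) + 1) ^ 2 + ((n : ℝ) - (a : ℝ) + 1) ^ 2)
                    * f.eval ((a : ℝ) / (n : ℝ)))
                  / (((n : ℝ) + 1) * ((n : ℝ) + 2))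
              - f.eval ((a : ℝ) / (n : ℝ)))
          - (((a : ℝ) / (n : ℝ)) * (1 - (a : ℝ) / (n : ℝ))
                * (derivative (derivative f)).eval ((a : ℝ) / (n : ℝ))
              + (1 - 2 * ((a : ℝ) / (n : ℝ))) * (derivative f).eval ((a : ℝ) / (n : ℝ)))|))
      atTop (nhds 0) := by
  obtain ⟨C, hC0, hC⟩ := key_bound f
  refine squeeze_zero' ?_ ?_ (tendsto_const_div_atTop_nhds_zero_nat C)
  · filter_upwards with n
    have h0 : (0 : ℕ) ∈ Finset.range (n + 1) := Finset.mem_range.mpr (by omega)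
    exact Finset.le_sup'_of_le _ h0 (abs_nonneg _)
  · filter_upwards [eventually_ge_atTop 1] with n hn
    exact Finset.sup'_le _ _ fun a ha =>
      hC n a hn (Nat.lt_succ_iff.mp (Finset.mem_range.mp ha))
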